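/- Let f be a homeomorphism of the circle S¹ and let μ be a Borel probability measure on S¹ that is inner-distal with respect to f. Then the support of μ is contained in the non-wandering set Ω(f) of f. -/

import Mathlib

open Metric Set MeasureTheory Filter Topology

/-- The proximal cell of `x` with respect to the iterates `f ^ n`, `n : ℤ`. -/
noncomputable def proximalCell {X : Type*} [MetricSpace X] (f : Equiv.Perm X) (x : X) : Set X :=
  {y | (⨅ n : ℤ, dist ((f ^ n) x) ((f ^ n) y)) = 0}

instance instFactZeroLtOneReal : Fact ((0:ℝ) < 1) := ⟨one_pos⟩


lemma coe_int_zero (n : ℤ) : ((n : ℝ) : AddCircle (1:ℝ)) = 0 := by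
  rw [AddCircle.coe_eq_zero_iff]
  exact ⟨n, by simp⟩

lemma dist_le_half (a b : AddCircle (1:ℝ)) : dist a b ≤ 2⁻¹ := by
  obtain ⟨c, hc⟩ := QuotientAddGroup.mk_surjective (a - b)
  have : dist a b = ‖(c : AddCircle (1:ℝ))‖ := by rw [dist_eq_norm, hc]
  rw [this, AddCircle.norm_eq]
  simpa using abs_sub_round c

lemma vol_key {S : Set (AddCircle (1:ℝ))} (hS : IsOpen S) (hconn : IsPreconnected S)
    {a b : AddCircle (1:ℝ)} (ha : a ∈ S) (hb : b ∈ S) :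
    ENNReal.ofReal (dist a b) ≤ 2 * volume S := by
  obtain ⟨a₀, ha₀⟩ := QuotientAddGroup.mk_surjective a
  set d := dist a b with hd
  have hd0 : 0 ≤ d := dist_nonneg
  have hd2 : d ≤ 2⁻¹ := dist_le_half a b
  -- intermediate value
  have himg : Icc (0:ℝ) d ⊆ (fun y => dist a y) '' S := by
    have hc : ContinuousOn (fun y => dist a y) S := (continuous_const.dist continuous_id).continuousOn
    exact (hconn.image _ hc).Icc_subset ⟨a, ha, by simp⟩ ⟨b, hb, rfl⟩
  set T : Set ℝ := Icc 0 d ∩ (fun t : ℝ => ((a₀ + t : ℝ) : AddCircle (1:ℝ))) ⁻¹' S with hT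
  set T' : Set ℝ := Icc 0 d ∩ (fun t : ℝ => ((a₀ - t : ℝ) : AddCircle (1:ℝ))) ⁻¹' S with hT'
  have hmkcont : Continuous ((↑) : ℝ → AddCircle (1:ℝ)) := continuous_quotient_mk'
  have hcover : Icc (0:ℝ) d ⊆ T ∪ T' := by
    intro t ht
    obtain ⟨y, hyS, hgy⟩ := himg ht
    obtain ⟨y₀, hy₀⟩ := QuotientAddGroup.mk_surjective y
    have hdist : dist a y = |y₀ - a₀ - round (y₀ - a₀)| := by
      rw [dist_eq_norm', ← hy₀, ← ha₀, ← QuotientAddGroup.mk_sub, AddCircle.norm_eq]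
      simp
    set u : ℝ := y₀ - a₀ - round (y₀ - a₀) with hu
    have hcoeu : ((u : ℝ) : AddCircle (1:ℝ)) = y - a := by
      rw [hu, sub_eq_add_neg (y₀ - a₀), QuotientAddGroup.mk_add, ← hy₀, ← ha₀,
        ← QuotientAddGroup.mk_sub]
      have : ((-(round (y₀ - a₀) : ℝ) : ℝ) : AddCircle (1:ℝ)) = 0 := by
        rw [show (-(round (y₀ - a₀):ℝ)) = ((-(round (y₀ - a₀)) : ℤ) : ℝ) by push_cast; ring]
        exact coe_int_zero _
      rw [this, add_zero]
    have habs : |u| = t := by rw [← hdist]; exact hgy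
    rcases (abs_eq ht.1).mp habs with h1 | h1
    · left
      refine ⟨ht, ?_⟩
      have : ((a₀ + t : ℝ) : AddCircle (1:ℝ)) = y := by
        rw [QuotientAddGroup.mk_add, ha₀, ← h1, hcoeu]; abel
      show ((a₀ + t : ℝ) : AddCircle (1:ℝ)) ∈ S
      rw [this]; exact hyS
    · right
      refine ⟨ht, ?_⟩
      have : ((a₀ - t : ℝ) : AddCircle (1:ℝ)) = y := by
        have ht' : ((t:ℝ) : AddCircle (1:ℝ)) = -(y - a) := by
          rw [← hcoeu, h1]; simp
        rw [QuotientAddGroup.mk_sub, ha₀, ht']; abel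
      show ((a₀ - t : ℝ) : AddCircle (1:ℝ)) ∈ S
      rw [this]; exact hyS
  have hTvol : volume T ≤ volume S := by
    have hmem : T ⊆ (fun t : ℝ => a₀ + t) ⁻¹'
        (((↑) : ℝ → AddCircle (1:ℝ)) ⁻¹' S ∩ Ioc (a₀ - 4⁻¹) (a₀ - 4⁻¹ + 1)) := by
      rintro t ⟨⟨ht0, htd⟩, htS⟩
      exact ⟨htS, by constructor <;> [linarith; linarith [le_trans htd hd2]]⟩
    calc volume T ≤ _ := measure_mono hmem
      _ = volume ((((↑) : ℝ → AddCircle (1:ℝ)) ⁻¹' S) ∩ Ioc (a₀ - 4⁻¹) (a₀ - 4⁻¹ + 1)) :=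
        (measurePreserving_add_left volume a₀).measure_preimage
          (((hS.preimage hmkcont).measurableSet.inter measurableSet_Ioc).nullMeasurableSet)
      _ = volume S := (AddCircle.add_projection_respects_measure (T := (1:ℝ)) _
          hS.measurableSet).symm
  have hT'vol : volume T' ≤ volume S := by
    have hmem : T' ⊆ (fun t : ℝ => a₀ - t) ⁻¹'
        (((↑) : ℝ → AddCircle (1:ℝ)) ⁻¹' S ∩ Ioc (a₀ - 4⁻¹ - 2⁻¹) (a₀ - 4⁻¹ - 2⁻¹ + 1)) := by
      rintro t ⟨⟨ht0, htd⟩, htS⟩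
      exact ⟨htS, by constructor <;> [linarith [le_trans htd hd2]; linarith]⟩
    calc volume T' ≤ _ := measure_mono hmem
      _ = volume ((((↑) : ℝ → AddCircle (1:ℝ)) ⁻¹' S) ∩ Ioc (a₀ - 4⁻¹ - 2⁻¹) (a₀ - 4⁻¹ - 2⁻¹ + 1)) :=
        (Measure.measurePreserving_sub_left volume a₀).measure_preimage
          (((hS.preimage hmkcont).measurableSet.inter measurableSet_Ioc).nullMeasurableSet)
      _ = volume S := (AddCircle.add_projection_respects_measure (T := (1:ℝ)) _
          hS.measurableSet).symm
  calc ENNReal.ofReal d = volume (Icc (0:ℝ) d) := by rw [Real.volume_Icc, sub_zero]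
    _ ≤ volume (T ∪ T') := measure_mono hcover
    _ ≤ volume T + volume T' := measure_union_le _ _
    _ ≤ volume S + volume S := add_le_add hTvol hT'vol
    _ = 2 * volume S := (two_mul _).symm

lemma cont_pow (g : AddCircle (1:ℝ) ≃ₜ AddCircle (1:ℝ)) (n : ℕ) :
    Continuous ⇑(g.toEquiv ^ n) := by
  induction n with
  | zero => simpa using continuous_id
  | succ k ih =>
    have h : ⇑(g.toEquiv ^ (k + 1)) = ⇑(g.toEquiv ^ k) ∘ ⇑g := by
      ext x; simp [pow_succ, Equiv.Perm.mul_apply]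
    rw [h]; exact ih.comp g.continuous

lemma cont_pow_symm (g : AddCircle (1:ℝ) ≃ₜ AddCircle (1:ℝ)) (n : ℕ) :
    Continuous ⇑(g.toEquiv ^ n).symm := by
  have h : (g.toEquiv ^ n).symm = g.symm.toEquiv ^ n := by
    rw [← Equiv.Perm.inv_def, ← inv_pow]
    rfl
  rw [h]; exact cont_pow g.symm n

/-- The support of an inner-distal measure of a circle homeomorphism is contained in the
non-wandering set. -/
theorem stmt17 (f : AddCircle (1:ℝ) ≃ₜ AddCircle (1:ℝ))
    (μ : Measure (AddCircle (1:ℝ))) [IsProbabilityMeasure μ]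
    (hμ : ∀ x : AddCircle (1:ℝ), μ (interior (proximalCell f.toEquiv x)) = 0) :
    {x : AddCircle (1:ℝ) | ∀ U : Set (AddCircle (1:ℝ)), IsOpen U → x ∈ U → 0 < μ U} ⊆
      {x : AddCircle (1:ℝ) | ∀ U : Set (AddCircle (1:ℝ)), IsOpen U → x ∈ U →
        ∃ n : ℕ, 0 < n ∧ (U ∩ (f.toEquiv ^ (n : ℤ)) '' U).Nonempty} := by
  intro x hx
  simp only [mem_setOf_eq] at hx ⊢
  intro U hU hxU
  by_contra hcon
  push_neg at hcon
  have hcon' : ∀ n : ℕ, 0 < n → U ∩ (f.toEquiv ^ n) '' U = ∅ := by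
    intro n hn
    have := hcon n hn
    rwa [zpow_natCast] at this
  -- construct a connected open neighborhood V of x inside U
  obtain ⟨x₀, hx₀⟩ := QuotientAddGroup.mk_surjective x
  have hpre : IsOpen (((↑) : ℝ → AddCircle (1:ℝ)) ⁻¹' U) :=
    hU.preimage continuous_quotient_mk'
  have hx₀U : x₀ ∈ ((↑) : ℝ → AddCircle (1:ℝ)) ⁻¹' U := by
    show ((x₀ : ℝ) : AddCircle (1:ℝ)) ∈ U; rw [hx₀]; exact hxU
  obtain ⟨r, hr, hball⟩ := Metric.isOpen_iff.mp hpre x₀ hx₀U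
  set V : Set (AddCircle (1:ℝ)) := ((↑) : ℝ → AddCircle (1:ℝ)) '' ball x₀ r with hV
  have hVU : V ⊆ U := by rintro _ ⟨t, ht, rfl⟩; exact hball ht
  have hxV : x ∈ V := ⟨x₀, mem_ball_self hr, hx₀⟩
  have hVopen : IsOpen V := QuotientAddGroup.isOpenMap_coe _ isOpen_ball
  have hVconn : IsPreconnected V :=
    (convex_ball x₀ r).isPreconnected.image _ continuous_quotient_mk'.continuousOn
  -- the iterates of V
  set W : ℕ → Set (AddCircle (1:ℝ)) := fun n => (f.toEquiv ^ n) '' V with hW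
  have hWopen : ∀ n, IsOpen (W n) := by
    intro n
    rw [hW]
    simp only [Equiv.image_eq_preimage_symm]
    exact hVopen.preimage (cont_pow_symm f n)
  have hWconn : ∀ n, IsPreconnected (W n) := fun n =>
    hVconn.image _ (cont_pow f n).continuousOn
  have hdisj : Pairwise (Function.onFun Disjoint W) := by
    have key : ∀ m n : ℕ, m < n → Disjoint (W m) (W n) := by
      intro m n hmn
      rw [Set.disjoint_left]
      rintro z ⟨u, hu, huz⟩ ⟨v, hv, hvz⟩
      have huv : u = (f.toEquiv ^ (n - m)) v := by
        apply (f.toEquiv ^ m).injective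
        rw [huz, ← hvz, ← Equiv.Perm.mul_apply, ← pow_add]
        congr 2
        omega
      have : u ∈ U ∩ (f.toEquiv ^ (n - m)) '' U := ⟨hVU hu, v, hVU hv, huv.symm⟩
      rw [hcon' (n - m) (by omega)] at this
      exact this
    intro m n hmn
    rcases lt_or_gt_of_ne hmn with h | h
    · exact key m n h
    · exact (key n m h).symm
  have hsum : ∑' n, volume (W n) ≠ ⊤ := by
    have h1 : volume (⋃ n, W n) = ∑' n, volume (W n) :=
      measure_iUnion hdisj fun n => (hWopen n).measurableSet
    rw [← h1]
    exact ((measure_mono (subset_univ _)).trans_lt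
      (by simp [AddCircle.measure_univ])).ne
  have htend : Tendsto (fun n => volume (W n)) atTop (𝓝 0) :=
    ENNReal.tendsto_atTop_zero_of_tsum_ne_top hsum
  -- V is inside the proximal cell of x
  have hsubcell : V ⊆ proximalCell f.toEquiv x := by
    intro y hy
    show (⨅ n : ℤ, dist ((f.toEquiv ^ n) x) ((f.toEquiv ^ n) y)) = 0
    have hbdd : BddBelow (range fun n : ℤ => dist ((f.toEquiv ^ n) x) ((f.toEquiv ^ n) y)) :=
      ⟨0, by rintro _ ⟨n, rfl⟩; exact dist_nonneg⟩
    refine le_antisymm ?_ (Real.iInf_nonneg fun n => dist_nonneg)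
    by_contra hpos
    push_neg at hpos
    set ε := ⨅ n : ℤ, dist ((f.toEquiv ^ n) x) ((f.toEquiv ^ n) y) with hε
    have hε4 : (0:ENNReal) < ENNReal.ofReal (ε / 4) := by
      rw [ENNReal.ofReal_pos]; linarith
    obtain ⟨N, hN⟩ := (ENNReal.tendsto_atTop_zero.mp htend) _ hε4
    have hvol := hN N le_rfl
    have hkey : ENNReal.ofReal (dist ((f.toEquiv ^ N) x) ((f.toEquiv ^ N) y))
        ≤ 2 * volume (W N) :=
      vol_key (hWopen N) (hWconn N) ⟨x, hxV, rfl⟩ ⟨y, hy, rfl⟩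
    have hlt : dist ((f.toEquiv ^ N) x) ((f.toEquiv ^ N) y) < ε := by
      have h2 : (2:ENNReal) * volume (W N) ≤ 2 * ENNReal.ofReal (ε / 4) :=
        mul_le_mul_right hvol 2
      have h3 : (2:ENNReal) * ENNReal.ofReal (ε / 4) < ENNReal.ofReal ε := by
        rw [show (2:ENNReal) = ENNReal.ofReal 2 by simp, ← ENNReal.ofReal_mul (by norm_num)]
        rw [ENNReal.ofReal_lt_ofReal_iff hpos]
        linarith
      have := lt_of_le_of_lt (hkey.trans h2) h3
      rwa [ENNReal.ofReal_lt_ofReal_iff hpos] at this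
    have hle : ε ≤ dist ((f.toEquiv ^ N) x) ((f.toEquiv ^ N) y) := by
      have := ciInf_le hbdd (N : ℤ)
      rwa [zpow_natCast] at this
    exact absurd (lt_of_le_of_lt hle hlt) (lt_irrefl _)
  have hμV : μ V ≤ μ (interior (proximalCell f.toEquiv x)) :=
    measure_mono (hVopen.subset_interior_iff.mpr hsubcell)
  have : μ V = 0 := le_antisymm (hμV.trans_eq (hμ x)) (zero_le)
  exact absurd (hx V hVopen hxV) (by simp [this])
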